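/- Let m, k, d be integers with d ≥ 1, k ≥ 0 and 2(k+1) ≤ m+1, and let L_1, L_2 ⊆ ℂ^{m+1} be ℂ-linear subspaces with dim L_1 = dim L_2 = k+1 and L_1 ∩ L_2 = {0}. Then the ℂ-vector subspace { g ∈ S_d : g vanishes identically on L_1 and on L_2 } of the space S_d of homogeneous polynomials of degree d in ℂ[x_0, …, x_m] has dimension binom(d + m, m) − 2·binom(d + k, k). -/

import Mathlib

open MvPolynomial

section Aux

lemma degree_eq_sum_id' {n : ℕ} (f : Fin n →₀ ℕ) : (f.sum fun _ => id) = f.degree := rfl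

noncomputable def symEquiv' (n d : ℕ) :
    {x : Fin n →₀ ℕ // x ∈ {y : Fin n →₀ ℕ | y.degree = d}} ≃ Sym (Fin n) d where
  toFun x := ⟨Finsupp.toMultiset x.1, by
    rw [Finsupp.card_toMultiset, degree_eq_sum_id']; exact x.2⟩
  invFun s := ⟨Multiset.toFinsupp s.1, by
    have : (Multiset.toFinsupp s.1).degree = Multiset.card s.1 := by
      rw [← degree_eq_sum_id', ← Finsupp.card_toMultiset, Multiset.toFinsupp_toMultiset]
    show (Multiset.toFinsupp s.1).degree = d
    rw [this]; exact s.2⟩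
  left_inv x := by simp
  right_inv s := by apply Subtype.ext; simp

lemma finrank_homog' (n d : ℕ) :
    Module.finrank ℂ (homogeneousSubmodule (Fin n) ℂ d) = (n + d - 1).choose d := by
  classical
  have : Fintype {x : Fin n →₀ ℕ // x ∈ {y : Fin n →₀ ℕ | y.degree = d}} :=
    Fintype.ofEquiv _ (symEquiv' n d).symm
  rw [homogeneousSubmodule_eq_finsupp_supported]
  rw [show (AddMonoidAlgebra.supported ℂ ℂ {y : Fin n →₀ ℕ | y.degree = d}) =
      MvPolynomial.restrictSupport ℂ {y : Fin n →₀ ℕ | y.degree = d} from rfl]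
  rw [Module.finrank_eq_card_basis (MvPolynomial.basisRestrictSupport ℂ _)]
  rw [Fintype.card_congr (symEquiv' n d), Sym.card_sym_eq_choose]
  simp

instance fdHomog' (n d : ℕ) : FiniteDimensional ℂ (homogeneousSubmodule (Fin n) ℂ d) := by
  classical
  have : Fintype {x : Fin n →₀ ℕ // x ∈ {y : Fin n →₀ ℕ | y.degree = d}} :=
    Fintype.ofEquiv _ (symEquiv' n d).symm
  rw [homogeneousSubmodule_eq_finsupp_supported]
  exact Module.Finite.of_basis (MvPolynomial.basisRestrictSupport ℂ _)

variable {σ τ ρ : Type*} [Fintype σ] [DecidableEq σ]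

/-- Pullback of polynomials along a linear map. -/
noncomputable def pb (T : (σ → ℂ) →ₗ[ℂ] (τ → ℂ)) :
    MvPolynomial τ ℂ →ₐ[ℂ] MvPolynomial σ ℂ :=
  aeval (fun i => ∑ j : σ, (T (Pi.single j 1) i) • X j)

lemma aeval_pb (T : (σ → ℂ) →ₗ[ℂ] (τ → ℂ)) (g : MvPolynomial τ ℂ) (v : σ → ℂ) :
    aeval v (pb T g) = aeval (T v) g := by
  rw [pb, ← AlgHom.comp_apply, comp_aeval]
  have : (fun i => aeval (R := ℂ) v (∑ j : σ, (T (Pi.single j 1) i) • X j)) = T v := by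
    funext i
    have hsingle : ∀ j : σ, (fun t => if j = t then (1:ℂ) else 0) = Pi.single j 1 := by
      intro j; funext t; simp [Pi.single_apply, eq_comm]
    have hv : T v = ∑ j : σ, v j • T (Pi.single j 1) := by
      conv_lhs => rw [pi_eq_sum_univ v]
      simp_rw [hsingle]
      simp [map_sum]
    rw [hv]
    simp [mul_comm]
  rw [this]

lemma pb_homog (T : (σ → ℂ) →ₗ[ℂ] (τ → ℂ)) {g : MvPolynomial τ ℂ} {d : ℕ}
    (hg : g.IsHomogeneous d) : (pb T g).IsHomogeneous d := by
  have := hg.aeval (S := ℂ) (fun i => ∑ j : σ, (T (Pi.single j 1) i) • X j) (n := 1) ?_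
  · simpa [pb] using this
  · intro i
    rw [← mem_homogeneousSubmodule]
    exact Submodule.sum_mem _ fun j _ => Submodule.smul_mem _ _
      (by rw [mem_homogeneousSubmodule]; exact isHomogeneous_X ℂ j)

lemma aeval_eq_eval'' {σ : Type*} (v : σ → ℂ) (p : MvPolynomial σ ℂ) :
    aeval (R := ℂ) v p = eval v p := by
  rw [← coe_aeval_eq_eval]; rfl

lemma mv_ext {σ : Type*} {p q : MvPolynomial σ ℂ}
    (h : ∀ v : σ → ℂ, aeval (R := ℂ) v p = aeval (R := ℂ) v q) : p = q :=
  MvPolynomial.funext fun x => by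
    rw [← aeval_eq_eval'', ← aeval_eq_eval'']; exact h x

lemma pb_pb [Fintype τ] [DecidableEq τ] (S : (σ → ℂ) →ₗ[ℂ] (τ → ℂ))
    (T : (τ → ℂ) →ₗ[ℂ] (ρ → ℂ)) (g : MvPolynomial ρ ℂ) :
    pb S (pb T g) = pb (T ∘ₗ S) g :=
  mv_ext fun v => by rw [aeval_pb, aeval_pb, aeval_pb]; rfl

lemma pb_id (g : MvPolynomial σ ℂ) : pb (LinearMap.id) g = g :=
  mv_ext fun v => by rw [aeval_pb]; rfl

lemma pb_zero {d : ℕ} (hd : d ≠ 0) {g : MvPolynomial τ ℂ} (hg : g.IsHomogeneous d) :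
    pb (0 : (σ → ℂ) →ₗ[ℂ] (τ → ℂ)) g = 0 :=
  mv_ext fun v => by
    rw [aeval_pb]
    have h0 : constantCoeff g = 0 :=
      hg.coeff_eq_zero (d := 0) (by simpa using Ne.symm hd)
    simp [h0]

lemma inf_ker {a b : ℕ} (T : (Fin a → ℂ) →ₗ[ℂ] (Fin b → ℂ)) :
    (⨅ v ∈ LinearMap.range T, LinearMap.ker (aeval (R := ℂ) v).toLinearMap)
      = LinearMap.ker (pb T).toLinearMap := by
  ext g
  simp only [Submodule.mem_iInf, LinearMap.mem_ker, AlgHom.toLinearMap_apply]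
  constructor
  · intro h
    exact mv_ext fun v => by
      rw [aeval_pb, map_zero]; exact h (T v) ⟨v, rfl⟩
  · rintro h v ⟨u, rfl⟩
    rw [← aeval_pb, h, map_zero]

end Aux

set_option synthInstance.maxHeartbeats 1000000 in
set_option maxHeartbeats 2000000 in
/-- The space of degree-`d` forms on `ℙ^m` vanishing on two fixed
skew `k`-dimensional linear subspaces has dimension `C(d+m,m) - 2·C(d+k,k)`. -/
theorem stmt_14 (m k d : ℕ) (hd : 1 ≤ d) (hdim : 2 * (k + 1) ≤ m + 1)
    (L₁ L₂ : Submodule ℂ (Fin (m + 1) → ℂ))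
    (hL₁ : Module.finrank ℂ L₁ = k + 1) (hL₂ : Module.finrank ℂ L₂ = k + 1)
    (hskew : L₁ ⊓ L₂ = ⊥) :
    (Module.finrank ℂ
        ↥(homogeneousSubmodule (Fin (m + 1)) ℂ d ⊓
          (⨅ v ∈ L₁, LinearMap.ker (aeval (R := ℂ) v).toLinearMap) ⊓
          (⨅ v ∈ L₂, LinearMap.ker (aeval (R := ℂ) v).toLinearMap)) : ℤ) =
      ((d + m).choose m : ℤ) - 2 * ((d + k).choose k : ℤ) := by
  classical
  -- bases and inclusion maps
  let b₁ : Module.Basis (Fin (k + 1)) ℂ L₁ := Module.finBasisOfFinrankEq ℂ L₁ hL₁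
  let b₂ : Module.Basis (Fin (k + 1)) ℂ L₂ := Module.finBasisOfFinrankEq ℂ L₂ hL₂
  let B₁ : (Fin (k + 1) → ℂ) →ₗ[ℂ] (Fin (m + 1) → ℂ) :=
    L₁.subtype ∘ₗ (b₁.equivFun.symm : (Fin (k + 1) → ℂ) ≃ₗ[ℂ] L₁).toLinearMap
  let B₂ : (Fin (k + 1) → ℂ) →ₗ[ℂ] (Fin (m + 1) → ℂ) :=
    L₂.subtype ∘ₗ (b₂.equivFun.symm : (Fin (k + 1) → ℂ) ≃ₗ[ℂ] L₂).toLinearMap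
  have hB₁r : LinearMap.range B₁ = L₁ := by
    rw [LinearMap.range_comp, LinearEquiv.range, Submodule.map_top, Submodule.range_subtype]
  have hB₂r : LinearMap.range B₂ = L₂ := by
    rw [LinearMap.range_comp, LinearEquiv.range, Submodule.map_top, Submodule.range_subtype]
  have hB₁i : Function.Injective B₁ :=
    L₁.injective_subtype.comp b₁.equivFun.symm.injective
  have hB₂i : Function.Injective B₂ :=
    L₂.injective_subtype.comp b₂.equivFun.symm.injective
  -- combined map and its left inverse
  let Bs : ((Fin (k + 1) ⊕ Fin (k + 1)) → ℂ) →ₗ[ℂ] (Fin (m + 1) → ℂ) :=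
    B₁ ∘ₗ LinearMap.funLeft ℂ ℂ Sum.inl + B₂ ∘ₗ LinearMap.funLeft ℂ ℂ Sum.inr
  have hBs : ∀ w, Bs w = B₁ (w ∘ Sum.inl) + B₂ (w ∘ Sum.inr) := fun w => rfl
  have hker : LinearMap.ker Bs = ⊥ := by
    rw [LinearMap.ker_eq_bot']
    intro w hw
    rw [hBs] at hw
    have heq : B₁ (w ∘ Sum.inl) = -(B₂ (w ∘ Sum.inr)) :=
      eq_neg_of_add_eq_zero_left hw
    have hmem : B₁ (w ∘ Sum.inl) ∈ L₁ ⊓ L₂ := by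
      constructor
      · rw [← hB₁r]; exact ⟨_, rfl⟩
      · rw [heq]; exact neg_mem (by rw [← hB₂r]; exact ⟨_, rfl⟩)
    rw [hskew, Submodule.mem_bot] at hmem
    have h1 : w ∘ Sum.inl = 0 := hB₁i (by rw [hmem, map_zero])
    have h2 : w ∘ Sum.inr = 0 := by
      apply hB₂i
      have := heq.symm
      rw [hmem] at this
      rw [map_zero, ← neg_eq_zero, this]
    funext x
    cases x with
    | inl i => exact congrFun h1 i
    | inr i => exact congrFun h2 i
  obtain ⟨π, hπ⟩ := Bs.exists_leftInverse_of_injective hker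
  let π₁ : (Fin (m + 1) → ℂ) →ₗ[ℂ] (Fin (k + 1) → ℂ) :=
    LinearMap.funLeft ℂ ℂ Sum.inl ∘ₗ π
  let π₂ : (Fin (m + 1) → ℂ) →ₗ[ℂ] (Fin (k + 1) → ℂ) :=
    LinearMap.funLeft ℂ ℂ Sum.inr ∘ₗ π
  have hπB : ∀ w, π (Bs w) = w := fun w => LinearMap.congr_fun hπ w
  have e₁ : ∀ u : Fin (k + 1) → ℂ, Bs (Sum.elim u 0) = B₁ u := by
    intro u
    rw [hBs]
    have : (Sum.elim u (0 : Fin (k + 1) → ℂ)) ∘ Sum.inr = 0 := rfl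
    rw [this, map_zero, add_zero]; rfl
  have e₂ : ∀ u : Fin (k + 1) → ℂ, Bs (Sum.elim 0 u) = B₂ u := by
    intro u
    rw [hBs]
    have : (Sum.elim (0 : Fin (k + 1) → ℂ) u) ∘ Sum.inl = 0 := rfl
    rw [this, map_zero, zero_add]; rfl
  have h11 : π₁ ∘ₗ B₁ = LinearMap.id := by
    apply LinearMap.ext; intro u
    show (LinearMap.funLeft ℂ ℂ Sum.inl) (π (B₁ u)) = u
    rw [← e₁, hπB]; rfl
  have h21 : π₂ ∘ₗ B₁ = 0 := by
    apply LinearMap.ext; intro u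
    show (LinearMap.funLeft ℂ ℂ Sum.inr) (π (B₁ u)) = 0
    rw [← e₁, hπB]; rfl
  have h12 : π₁ ∘ₗ B₂ = 0 := by
    apply LinearMap.ext; intro u
    show (LinearMap.funLeft ℂ ℂ Sum.inl) (π (B₂ u)) = 0
    rw [← e₂, hπB]; rfl
  have h22 : π₂ ∘ₗ B₂ = LinearMap.id := by
    apply LinearMap.ext; intro u
    show (LinearMap.funLeft ℂ ℂ Sum.inr) (π (B₂ u)) = u
    rw [← e₂, hπB]; rfl
  -- rewrite the kernels
  rw [← hB₁r, ← hB₂r, inf_ker, inf_ker]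
  set V := homogeneousSubmodule (Fin (m + 1)) ℂ d with hV
  set H := homogeneousSubmodule (Fin (k + 1)) ℂ d with hH
  set K₁ := LinearMap.ker (pb B₁).toLinearMap with hK₁
  set K₂ := LinearMap.ker (pb B₂).toLinearMap with hK₂
  -- the restricted evaluation map
  let Ψ₁ : V →ₗ[ℂ] H :=
    (((pb B₁).toLinearMap.domRestrict V).codRestrict H (fun g => pb_homog B₁ g.2))
  let Ψ₂ : V →ₗ[ℂ] H :=
    (((pb B₂).toLinearMap.domRestrict V).codRestrict H (fun g => pb_homog B₂ g.2))
  let Ψ : V →ₗ[ℂ] H × H := Ψ₁.prod Ψ₂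
  have hsurj : Function.Surjective Ψ := by
    rintro ⟨⟨p, hp⟩, ⟨q, hq⟩⟩
    refine ⟨⟨pb π₁ p + pb π₂ q,
      Submodule.add_mem _ (pb_homog π₁ hp) (pb_homog π₂ hq)⟩, ?_⟩
    have hc1 : pb B₁ (pb π₁ p + pb π₂ q) = p := by
      rw [map_add, pb_pb, pb_pb, h11, h21, pb_id, pb_zero (by omega) hq, add_zero]
    have hc2 : pb B₂ (pb π₁ p + pb π₂ q) = q := by
      rw [map_add, pb_pb, pb_pb, h12, h22, pb_id, pb_zero (by omega) hp, zero_add]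
    refine Prod.ext (Subtype.ext ?_) (Subtype.ext ?_)
    · exact hc1
    · exact hc2
  -- kernel of Ψ
  have hkerΨ : LinearMap.ker Ψ = Submodule.comap V.subtype (V ⊓ K₁ ⊓ K₂) := by
    rw [Submodule.comap_inf, Submodule.comap_inf, Submodule.comap_subtype_self,
      top_inf_eq]
    show LinearMap.ker (Ψ₁.prod Ψ₂) = _
    rw [LinearMap.ker_prod]
    congr 1
    · rw [hK₁]
      show LinearMap.ker Ψ₁ = _
      exact (LinearMap.ker_codRestrict _ _ _).trans (LinearMap.ker_domRestrict _ _)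
    · rw [hK₂]
      show LinearMap.ker Ψ₂ = _
      exact (LinearMap.ker_codRestrict _ _ _).trans (LinearMap.ker_domRestrict _ _)
  have hle : V ⊓ K₁ ⊓ K₂ ≤ V := le_trans inf_le_left inf_le_left
  have hkerrank : Module.finrank ℂ (LinearMap.ker Ψ) =
      Module.finrank ℂ (V ⊓ K₁ ⊓ K₂ : Submodule ℂ (MvPolynomial (Fin (m + 1)) ℂ)) := by
    rw [hkerΨ]
    exact (Submodule.comapSubtypeEquivOfLe hle).finrank_eq
  have hrank := LinearMap.finrank_range_add_finrank_ker Ψ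
  have hrange : LinearMap.range Ψ = ⊤ := LinearMap.range_eq_top.mpr hsurj
  rw [hrange] at hrank
  have hHfin : Module.finrank ℂ H = (d + k).choose k := by
    rw [hH, finrank_homog']
    have h1 : k + 1 + d - 1 = d + k := by omega
    rw [h1]
    have h2 : (d + k).choose k = (d + k).choose ((d + k) - k) := by
      rw [Nat.choose_symm (by omega)]
    rw [h2]
    congr 1
    omega
  have hVfin : Module.finrank ℂ V = (d + m).choose m := by
    rw [hV, finrank_homog']
    have h1 : m + 1 + d - 1 = d + m := by omega
    rw [h1]
    have h2 : (d + m).choose m = (d + m).choose ((d + m) - m) := by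
      rw [Nat.choose_symm (by omega)]
    rw [h2]
    congr 1
    omega
  have htop : Module.finrank ℂ (⊤ : Submodule ℂ (H × H)) = 2 * (d + k).choose k := by
    rw [finrank_top, Module.finrank_prod, hHfin]
    ring
  rw [htop, hkerrank, hVfin] at hrank
  -- conclude
  have : Module.finrank ℂ
      (V ⊓ K₁ ⊓ K₂ : Submodule ℂ (MvPolynomial (Fin (m + 1)) ℂ)) + 2 * (d + k).choose k
      = (d + m).choose m := by omega
  push_cast [← this]
  ring
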